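/- Let λ, μ > 0. Then the function x ↦ ((μ-λ)·x·e^{-λx} - e^{-λx} + e^{-μx})/x is Lebesgue integrable on (0,∞) and ∫_0^∞ ((μ-λ)·x·e^{-λx} - e^{-λx} + e^{-μx})·x^{-1} dx = μ/λ - 1 + log λ - log μ. -/

import Mathlib

open Real Filter Topology MeasureTheory Set

set_option maxHeartbeats 1000000

lemma expc_integrableOn {c : ℝ} (hc : 0 < c) (a : ℝ) :
    IntegrableOn (fun x : ℝ => Real.exp (-(c * x))) (Set.Ioi a) := by
  simpa [neg_mul] using exp_neg_integrableOn_Ioi a hc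

lemma integral_exp_neg_mul_Ioi_zero {c : ℝ} (hc : 0 < c) :
    ∫ x in Set.Ioi (0 : ℝ), Real.exp (-(c * x)) = c⁻¹ := by
  have := MeasureTheory.integral_comp_mul_left_Ioi (fun u => Real.exp (-u)) 0 hc
  simp only [mul_zero, integral_exp_neg_Ioi_zero, smul_eq_mul, mul_one] at this
  exact this

lemma inner_interval (a b x : ℝ) (hab : a ≤ b) (hx : 0 < x) :
    ∫ t in Set.Ioc a b, Real.exp (-(t * x))
      = (Real.exp (-(a * x)) - Real.exp (-(b * x))) / x := by
  rw [← intervalIntegral.integral_of_le hab]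
  have h1 : ∫ t in a..b, Real.exp (-(t * x))
      = x⁻¹ • ∫ u in a * x..b * x, Real.exp (-u) :=
    intervalIntegral.integral_comp_mul_right (fun u => Real.exp (-u)) hx.ne'
  have h2 : ∫ u in a * x..b * x, Real.exp (-u)
      = Real.exp (-(a * x)) - Real.exp (-(b * x)) := by
    rw [intervalIntegral.integral_comp_neg Real.exp, integral_exp]
  rw [h1, h2, smul_eq_mul, div_eq_mul_inv, mul_comm]

lemma frullani_le {a b : ℝ} (ha : 0 < a) (hab : a ≤ b) :
    IntegrableOn
      (fun x : ℝ => (Real.exp (-(a * x)) - Real.exp (-(b * x))) / x)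
      (Set.Ioi (0 : ℝ)) ∧
    ∫ x in Set.Ioi (0 : ℝ),
        (Real.exp (-(a * x)) - Real.exp (-(b * x))) / x
      = Real.log b - Real.log a := by
  have hb : 0 < b := lt_of_lt_of_le ha hab
  set μ : Measure ℝ := volume.restrict (Set.Ioi (0 : ℝ))
  set ν : Measure ℝ := volume.restrict (Set.Ioc a b)
  have hFmeas : AEStronglyMeasurable (fun p : ℝ × ℝ => Real.exp (-(p.2 * p.1)))
      (μ.prod ν) := by
    exact (Real.continuous_exp.comp
      (continuous_snd.mul continuous_fst).neg).aestronglyMeasurable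
  -- Integrability of the product function
  have hFint : Integrable (fun p : ℝ × ℝ => Real.exp (-(p.2 * p.1))) (μ.prod ν) := by
    rw [MeasureTheory.integrable_prod_iff hFmeas]
    constructor
    · refine Filter.Eventually.of_forall (fun x => ?_)
      exact (Real.continuous_exp.comp
        (continuous_id.mul continuous_const).neg).integrableOn_Ioc
    · have hbound : ∀ᵐ x ∂μ,
          ‖∫ t, ‖Real.exp (-(t * x))‖ ∂ν‖ ≤ Real.exp (-(a * x)) * (b - a) := by
        have : ∀ x ∈ Set.Ioi (0 : ℝ),
            ‖∫ t, ‖Real.exp (-(t * x))‖ ∂ν‖ ≤ Real.exp (-(a * x)) * (b - a) := by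
          intro x hx
          have hx0 : (0 : ℝ) < x := hx
          have hle : ∀ t ∈ Set.Ioc a b,
              ‖‖Real.exp (-(t * x))‖‖ ≤ Real.exp (-(a * x)) := by
            intro t ht
            simp only [norm_norm, Real.norm_eq_abs, abs_of_pos (Real.exp_pos _)]
            apply Real.exp_le_exp.2
            have : a * x ≤ t * x := mul_le_mul_of_nonneg_right ht.1.le hx0.le
            linarith
          have := MeasureTheory.norm_setIntegral_le_of_norm_le_const
            (μ := volume) (s := Set.Ioc a b)
            (f := fun t => ‖Real.exp (-(t * x))‖)
            (C := Real.exp (-(a * x)))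
            (by rw [Real.volume_Ioc]; exact ENNReal.ofReal_lt_top)
            hle
          rw [Real.volume_real_Ioc_of_le hab] at this
          exact this
        exact (MeasureTheory.ae_restrict_iff' measurableSet_Ioi).2
          (Filter.Eventually.of_forall this)
      refine MeasureTheory.Integrable.mono'
        (g := fun x => Real.exp (-(a * x)) * (b - a)) ?_ ?_ hbound
      · exact (expc_integrableOn ha 0).mul_const _
      · exact hFmeas.norm.integral_prod_right'
  -- agreement with the Frullani integrand
  have hEq : ∀ᵐ x ∂μ,
      (∫ t, Real.exp (-(t * x)) ∂ν)
        = (Real.exp (-(a * x)) - Real.exp (-(b * x))) / x := by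
    refine (MeasureTheory.ae_restrict_iff' measurableSet_Ioi).2
      (Filter.Eventually.of_forall fun x hx => ?_)
    exact inner_interval a b x hab hx
  have hint1 : Integrable (fun x => ∫ t, Real.exp (-(t * x)) ∂ν) μ :=
    hFint.integral_prod_left
  constructor
  · exact (MeasureTheory.Integrable.congr hint1 hEq)
  · have hswap := MeasureTheory.integral_integral_swap
      (f := fun x t => Real.exp (-(t * x))) hFint
    have hleft : ∫ x, (∫ t, Real.exp (-(t * x)) ∂ν) ∂μ
        = ∫ x in Set.Ioi (0 : ℝ),
            (Real.exp (-(a * x)) - Real.exp (-(b * x))) / x :=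
      MeasureTheory.integral_congr_ae hEq
    have hright : ∫ t, (∫ x, Real.exp (-(t * x)) ∂μ) ∂ν
        = Real.log b - Real.log a := by
      have h1 : ∀ᵐ t ∂ν, (∫ x, Real.exp (-(t * x)) ∂μ) = t⁻¹ := by
        refine (MeasureTheory.ae_restrict_iff' measurableSet_Ioc).2
          (Filter.Eventually.of_forall fun t ht => ?_)
        have ht0 : 0 < t := lt_of_lt_of_le ha ht.1.le
        exact integral_exp_neg_mul_Ioi_zero ht0
      rw [MeasureTheory.integral_congr_ae h1]
      have : ∫ t in Set.Ioc a b, (t : ℝ)⁻¹ = ∫ t in a..b, 1 / t := by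
        rw [intervalIntegral.integral_of_le hab]
        simp [one_div]
      rw [show (∫ t, t⁻¹ ∂ν) = ∫ t in Set.Ioc a b, (t : ℝ)⁻¹ from rfl, this,
        integral_one_div_of_pos ha hb, Real.log_div hb.ne' ha.ne']
    rw [← hleft, hswap, hright]

lemma frullani {a b : ℝ} (ha : 0 < a) (hb : 0 < b) :
    IntegrableOn
      (fun x : ℝ => (Real.exp (-(a * x)) - Real.exp (-(b * x))) / x)
      (Set.Ioi (0 : ℝ)) ∧
    ∫ x in Set.Ioi (0 : ℝ),
        (Real.exp (-(a * x)) - Real.exp (-(b * x))) / x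
      = Real.log b - Real.log a := by
  rcases le_total a b with hab | hab
  · exact frullani_le ha hab
  · obtain ⟨hI, hV⟩ := frullani_le hb hab
    have hneg : (fun x : ℝ => (Real.exp (-(a * x)) - Real.exp (-(b * x))) / x)
        = fun x => -((Real.exp (-(b * x)) - Real.exp (-(a * x))) / x) := by
      funext x; ring
    constructor
    · rw [hneg]; exact hI.neg
    · rw [hneg, MeasureTheory.integral_neg, hV]; ring

/-- For `λ, μ > 0`, the function
`x ↦ ((μ-λ)·x·e^{-λx} - e^{-λx} + e^{-μx})/x` is Lebesgue integrable on
`(0,∞)` and its integral equals `μ/λ - 1 + log λ - log μ`. -/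
theorem vg_kl_integral_eval (lam mu : ℝ) (hlam : 0 < lam) (hmu : 0 < mu) :
    IntegrableOn
      (fun x : ℝ =>
        ((mu - lam) * x * Real.exp (-(lam * x)) - Real.exp (-(lam * x))
          + Real.exp (-(mu * x))) / x)
      (Set.Ioi (0 : ℝ)) ∧
    ∫ x in Set.Ioi (0 : ℝ),
        ((mu - lam) * x * Real.exp (-(lam * x)) - Real.exp (-(lam * x))
          + Real.exp (-(mu * x))) * x⁻¹
      = mu / lam - 1 + Real.log lam - Real.log mu := by
  obtain ⟨hFI, hFV⟩ := frullani hmu hlam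
  have hEI : IntegrableOn (fun x : ℝ => (mu - lam) * Real.exp (-(lam * x)))
      (Set.Ioi (0 : ℝ)) := (expc_integrableOn hlam 0).const_mul _
  have hEq : ∀ x ∈ Set.Ioi (0 : ℝ),
      ((mu - lam) * x * Real.exp (-(lam * x)) - Real.exp (-(lam * x))
          + Real.exp (-(mu * x))) / x
        = (mu - lam) * Real.exp (-(lam * x))
          + (Real.exp (-(mu * x)) - Real.exp (-(lam * x))) / x := by
    intro x hx
    have hx0 : (x : ℝ) ≠ 0 := (lt_of_lt_of_le zero_lt_one (le_refl 1) |> fun _ => hx.ne')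
    field_simp
    ring
  have hsumI : IntegrableOn
      (fun x : ℝ => (mu - lam) * Real.exp (-(lam * x))
        + (Real.exp (-(mu * x)) - Real.exp (-(lam * x))) / x)
      (Set.Ioi (0 : ℝ)) := hEI.add hFI
  constructor
  · exact hsumI.congr_fun (fun x hx => (hEq x hx).symm) measurableSet_Ioi
  · have hrw : ∀ x ∈ Set.Ioi (0 : ℝ),
        ((mu - lam) * x * Real.exp (-(lam * x)) - Real.exp (-(lam * x))
          + Real.exp (-(mu * x))) * x⁻¹
          = (mu - lam) * Real.exp (-(lam * x))
            + (Real.exp (-(mu * x)) - Real.exp (-(lam * x))) / x := by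
      intro x hx
      rw [← div_eq_mul_inv]
      exact hEq x hx
    rw [MeasureTheory.setIntegral_congr_fun measurableSet_Ioi hrw,
      MeasureTheory.integral_add hEI hFI, MeasureTheory.integral_const_mul,
      integral_exp_neg_mul_Ioi_zero hlam, hFV, sub_mul,
      mul_inv_cancel₀ hlam.ne', ← div_eq_mul_inv]
    ring
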